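/- Let n = 2s+1 be odd and let G(n;k_1,...,k_n) be the unicyclic graph formed from an odd cycle a_1,...,a_n with k_i pendant vertices attached to a_i. Then G(n;k_1,...,k_n) is super edge-magic total and sm(G(n;k_1,...,k_n)) ≤ 2(k_1+k_3+...+k_{2s+1}) + 3(k_2+k_4+...+k_{2s}) + 2n + s + 2. -/

import Mathlib

/-- A super edge-magic total labeling of a graph `G` with `p = Fintype.card V` vertices and
`q = G.edgeSet.ncard` edges: `fv` maps the vertices bijectively onto `{1,…,p}`, `fe` maps the
edges bijectively onto `{p+1,…,p+q}` (so together they form a bijection of `V ∪ E` onto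
`{1,…,p+q}` with `f(V) = {1,…,p}`), and every edge `uv` satisfies `f(u)+f(v)+f(uv) = c`. -/
def IsSEMT {V : Type*} [Fintype V] (G : SimpleGraph V)
    (fv : V → ℕ) (fe : Sym2 V → ℕ) (c : ℕ) : Prop :=
  Set.BijOn fv Set.univ (Set.Icc 1 (Fintype.card V)) ∧
  Set.BijOn fe G.edgeSet
    (Set.Icc (Fintype.card V + 1) (Fintype.card V + G.edgeSet.ncard)) ∧
  ∀ u v, G.Adj u v → fv u + fv v + fe s(u, v) = c

/-- The unicyclic graph `G(n; k₁, …, kₙ)`: a cycle on `Fin n` (vertex `i` adjacent to `i+1 mod n`)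
with `k i` pendant vertices attached to the cycle vertex `i`. -/
def pendantCycle (n : ℕ) (k : Fin n → ℕ) :
    SimpleGraph (Fin n ⊕ Σ i : Fin n, Fin (k i)) :=
  SimpleGraph.fromRel (fun a b =>
    (∃ i j : Fin n, a = Sum.inl i ∧ b = Sum.inl j ∧ (i.val + 1) % n = j.val) ∨
    (∃ (i : Fin n) (j : Fin (k i)), a = Sum.inr ⟨i, j⟩ ∧ b = Sum.inl i))



namespace SEMTaux

variable (s : ℕ) (k : Fin (2*s+1) → ℕ)

/-- `k` extended to `ℕ` by zero. -/
def k' (m : ℕ) : ℕ := if h : m < 2*s+1 then k ⟨m, h⟩ else 0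

def Sf (t : ℕ) : ℕ := ∑ r ∈ Finset.range t, k' s k (2*r+1)
def Tf (t : ℕ) : ℕ := ∑ r ∈ Finset.range t, k' s k (2*r)
def B : ℕ := Sf s k s
def A : ℕ := Tf s k (s+1)
def p : ℕ := 2*s+1 + A s k + B s k

abbrev V := Fin (2*s+1) ⊕ Σ i : Fin (2*s+1), Fin (k i)

def fv : V s k → ℕ
  | .inl i => if i.val % 2 = 0 then 1 + i.val/2 + Sf s k (i.val/2)
      else (s+1+B s k) + (i.val/2 + 1) + Tf s k (i.val/2 + 1)
  | .inr ⟨i, j⟩ => if i.val % 2 = 0 then (s+1+B s k) + Tf s k (i.val/2) + i.val/2 + 1 + j.val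
      else i.val/2 + 2 + Sf s k (i.val/2) + j.val

def nxt : V s k → V s k
  | .inl i => .inl (i+1)
  | .inr ⟨i, _⟩ => .inl i

def σf (v : V s k) : ℕ := fv s k v + fv s k (nxt s k v)

def Ef (v : V s k) : Sym2 (V s k) := s(v, nxt s k v)

def mmin : ℕ := s + B s k + 2
def c : ℕ := 2 * p s k + mmin s k

def fe : Sym2 (V s k) → ℕ :=
  Sym2.lift ⟨fun a b => c s k - (fv s k a + fv s k b), fun a b => by simp [Nat.add_comm]⟩

lemma fe_mk (a b : V s k) : fe s k s(a, b) = c s k - (fv s k a + fv s k b) := rfl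

lemma Sf_mono {a b : ℕ} (h : a ≤ b) : Sf s k a ≤ Sf s k b :=
  Finset.sum_le_sum_of_subset (Finset.range_subset_range.2 h)
lemma Tf_mono {a b : ℕ} (h : a ≤ b) : Tf s k a ≤ Tf s k b :=
  Finset.sum_le_sum_of_subset (Finset.range_subset_range.2 h)
lemma Sf_succ (t : ℕ) : Sf s k (t+1) = Sf s k t + k' s k (2*t+1) := Finset.sum_range_succ _ _
lemma Tf_succ (t : ℕ) : Tf s k (t+1) = Tf s k t + k' s k (2*t) := Finset.sum_range_succ _ _

lemma k'_eq (i : Fin (2*s+1)) : k' s k i.val = k i := by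
  simp [k', i.isLt]

/- evaluation lemmas -/
lemma fv_even (t : ℕ) (h : 2*t < 2*s+1) :
    fv s k (.inl ⟨2*t, h⟩) = 1 + t + Sf s k t := by
  simp [fv, Nat.mul_mod_right, Nat.mul_div_cancel_left _ (by norm_num : 0 < 2)]

lemma fv_odd (t : ℕ) (h : 2*t+1 < 2*s+1) :
    fv s k (.inl ⟨2*t+1, h⟩) = (s+1+B s k) + (t+1) + Tf s k (t+1) := by
  have h1 : (2*t+1) % 2 = 1 := by omega
  have h2 : (2*t+1) / 2 = t := by omega
  simp [fv, h1, h2]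

lemma fvp_even (t : ℕ) (h : 2*t < 2*s+1) (j : Fin (k ⟨2*t, h⟩)) :
    fv s k (.inr ⟨⟨2*t, h⟩, j⟩) = (s+1+B s k) + Tf s k t + t + 1 + j.val := by
  have h2 : (2*t) / 2 = t := by omega
  simp [fv, Nat.mul_mod_right, h2]

lemma fvp_odd (t : ℕ) (h : 2*t+1 < 2*s+1) (j : Fin (k ⟨2*t+1, h⟩)) :
    fv s k (.inr ⟨⟨2*t+1, h⟩, j⟩) = t + 2 + Sf s k t + j.val := by
  have h1 : (2*t+1) % 2 = 1 := by omega
  have h2 : (2*t+1) / 2 = t := by omega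
  simp [fv, h1, h2]

lemma nxt_inl (i : Fin (2*s+1)) (h : i.val + 1 < 2*s+1) :
    nxt s k (.inl i) = .inl ⟨i.val+1, h⟩ := by
  simp only [nxt, Sum.inl.injEq]
  ext
  simp [Fin.add_def]
  omega

lemma nxt_last (h : 2*s < 2*s+1) :
    nxt s k (.inl ⟨2*s, h⟩) = .inl ⟨0, by omega⟩ := by
  simp only [nxt, Sum.inl.injEq]
  ext
  simp [Fin.add_def]

end SEMTaux

namespace SEMTaux
variable (s : ℕ) (k : Fin (2*s+1) → ℕ)

/- σ evaluation lemmas -/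
lemma σ_inl_even (t : ℕ) (h : t < s) :
    σf s k (.inl ⟨2*t, by omega⟩) = s + B s k + (2*t+3) + Sf s k t + Tf s k (t+1) := by
  have h1 : (2*t)+1 < 2*s+1 := by omega
  rw [σf, nxt_inl s k _ h1, fv_even]
  have : (⟨2*t+1, h1⟩ : Fin (2*s+1)) = ⟨2*t+1, by omega⟩ := rfl
  rw [this, fv_odd]
  ring

lemma σ_inl_odd (t : ℕ) (h : t < s) :
    σf s k (.inl ⟨2*t+1, by omega⟩) = s + B s k + (2*t+4) + Sf s k (t+1) + Tf s k (t+1) := by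
  have h1 : (2*t+1)+1 < 2*s+1 := by omega
  rw [σf, nxt_inl s k _ h1, fv_odd]
  have : (⟨2*t+1+1, h1⟩ : Fin (2*s+1)) = ⟨2*(t+1), by omega⟩ := rfl
  rw [this, fv_even]
  ring

lemma σ_last : σf s k (.inl ⟨2*s, by omega⟩) = s + B s k + 2 := by
  rw [σf, nxt_last, fv_even]
  have : (⟨0, by omega⟩ : Fin (2*s+1)) = ⟨2*0, by omega⟩ := rfl
  rw [this, fv_even]
  simp [B, Sf]
  ring

lemma σ_pend_even (t : ℕ) (h : 2*t < 2*s+1) (j : Fin (k ⟨2*t, h⟩)) :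
    σf s k (.inr ⟨⟨2*t, h⟩, j⟩) = s + B s k + (2*t+3) + Sf s k t + Tf s k t + j.val := by
  rw [σf]
  have : nxt s k (.inr ⟨⟨2*t, h⟩, j⟩) = .inl ⟨2*t, h⟩ := rfl
  rw [this, fvp_even, fv_even]
  ring

lemma σ_pend_odd (t : ℕ) (h : 2*t+1 < 2*s+1) (j : Fin (k ⟨2*t+1, h⟩)) :
    σf s k (.inr ⟨⟨2*t+1, h⟩, j⟩) = s + B s k + (2*t+4) + Sf s k t + Tf s k (t+1) + j.val := by
  rw [σf]
  have : nxt s k (.inr ⟨⟨2*t+1, h⟩, j⟩) = .inl ⟨2*t+1, h⟩ := rfl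
  rw [this, fvp_odd, fv_odd]
  ring

/-- generic block-finding lemma -/
lemma exists_block (f : ℕ → ℕ) : ∀ (n y : ℕ), f 0 ≤ y → y < f n →
    ∃ t, t < n ∧ f t ≤ y ∧ y < f (t+1) := by
  intro n
  induction n with
  | zero => intro y h1 h2; omega
  | succ n ih =>
    intro y h1 h2
    by_cases h : f n ≤ y
    · exact ⟨n, by omega, h, h2⟩
    · obtain ⟨t, ht⟩ := ih y h1 (by omega)
      exact ⟨t, by omega, ht.2⟩

end SEMTaux

namespace SEMTaux
variable (s : ℕ) (k : Fin (2*s+1) → ℕ)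

lemma hB : B s k = Sf s k s := rfl
lemma hA : A s k = Tf s k (s+1) := rfl
lemma hp : p s k = 2*s+1 + A s k + B s k := rfl

lemma fv_mem (v : V s k) : fv s k v ∈ Finset.Icc 1 (p s k) := by
  have hp := hp s k
  rw [Finset.mem_Icc]
  rcases v with ⟨iv, hlt⟩ | ⟨⟨iv, hlt⟩, j⟩
  · obtain ⟨t, ht⟩ : ∃ t, iv = 2*t ∨ iv = 2*t+1 := ⟨iv/2, by omega⟩
    rcases ht with rfl | rfl
    · rw [fv_even]
      have h1 : Sf s k t ≤ B s k := Sf_mono s k (by omega)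
      omega
    · rw [fv_odd]
      have h1 : Tf s k (t+1) ≤ A s k := Tf_mono s k (by omega)
      omega
  · have hj : j.val < k' s k iv := by rw [k'_eq s k ⟨iv, hlt⟩]; exact j.isLt
    obtain ⟨t, ht⟩ : ∃ t, iv = 2*t ∨ iv = 2*t+1 := ⟨iv/2, by omega⟩
    rcases ht with rfl | rfl
    · rw [fvp_even]
      have h1 : Tf s k (t+1) ≤ A s k := Tf_mono s k (by omega)
      have h2 := Tf_succ s k t
      omega
    · rw [fvp_odd]
      have h1 : Sf s k (t+1) ≤ B s k := Sf_mono s k (by omega)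
      have h2 := Sf_succ s k t
      omega

lemma fv_surj (y : ℕ) (hy : y ∈ Finset.Icc 1 (p s k)) : ∃ v, fv s k v = y := by
  have hp := hp s k
  have hB := hB s k
  have hA := hA s k
  rw [Finset.mem_Icc] at hy
  by_cases hlow : y ≤ s + 1 + B s k
  · -- low part
    set f : ℕ → ℕ := fun t => 1 + t + Sf s k (min t s) with hf
    have h0 : f 0 ≤ y := by simp [hf, Sf]; omega
    have hend : y < f (s+1) := by
      have e1 : min (s+1) s = s := by omega
      simp only [hf, e1]
      omega
    obtain ⟨t, htn, h1, h2⟩ := exists_block f (s+1) y h0 hend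
    have hts : t ≤ s := by omega
    have hft : f t = 1 + t + Sf s k t := by
      have e1 : min t s = t := by omega
      simp only [hf, e1]
    by_cases hd : y = 1 + t + Sf s k t
    · exact ⟨.inl ⟨2*t, by omega⟩, by rw [fv_even]; omega⟩
    · -- pendant of 2t+1; need t < s
      have hts' : t < s := by
        rcases Nat.lt_or_ge t s with h | h
        · exact h
        · exfalso
          have e0 : t = s := by omega
          have e1 : min (t+1) s = t := by omega
          have hfs : f (t+1) = 1 + (t+1) + Sf s k t := by simp only [hf, e1]
          omega
      have hft1 : f (t+1) = 1 + (t+1) + Sf s k t + k' s k (2*t+1) := by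
        have e1 : min (t+1) s = t+1 := by omega
        simp only [hf, e1, Sf_succ]
        omega
      have hjlt : y - (2 + t + Sf s k t) < k' s k (2*t+1) := by omega
      have hb : 2*t+1 < 2*s+1 := by omega
      have hjlt' : y - (2 + t + Sf s k t) < k ⟨2*t+1, hb⟩ := by
        rwa [← k'_eq s k ⟨2*t+1, hb⟩]
      refine ⟨.inr ⟨⟨2*t+1, hb⟩, ⟨_, hjlt'⟩⟩, ?_⟩
      rw [fvp_odd]
      show t + 2 + Sf s k t + (y - (2 + t + Sf s k t)) = y
      omega
  · -- high part
    set f : ℕ → ℕ := fun t => s + 2 + B s k + Tf s k (min t (s+1)) + min t s with hf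
    have h0 : f 0 ≤ y := by simp [hf, Tf]; omega
    have hend : y < f (s+1) := by
      have e1 : min (s+1) (s+1) = s+1 := by omega
      have e2 : min (s+1) s = s := by omega
      simp only [hf, e1, e2]
      omega
    obtain ⟨t, htn, h1, h2⟩ := exists_block f (s+1) y h0 hend
    have hts : t ≤ s := by omega
    have hft : f t = s + 2 + B s k + Tf s k t + t := by
      have e1 : min t (s+1) = t := by omega
      have e2 : min t s = t := by omega
      simp only [hf, e1, e2]
    have hft1 : f (t+1) ≤ s + 2 + B s k + Tf s k t + k' s k (2*t) + t + 1 := by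
      have e1 : min (t+1) (s+1) = t+1 := by omega
      have e2 : min (t+1) s ≤ t + 1 := by omega
      simp only [hf, e1, Sf_succ, Tf_succ]
      omega
    by_cases hd : y - (s + 2 + B s k + Tf s k t + t) < k' s k (2*t)
    · have hb : 2*t < 2*s+1 := by omega
      have hd' : y - (s + 2 + B s k + Tf s k t + t) < k ⟨2*t, hb⟩ := by
        rwa [← k'_eq s k ⟨2*t, hb⟩]
      refine ⟨.inr ⟨⟨2*t, hb⟩, ⟨_, hd'⟩⟩, ?_⟩
      rw [fvp_even]
      show s + 1 + B s k + Tf s k t + t + 1 + (y - (s + 2 + B s k + Tf s k t + t)) = y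
      omega
    · -- cycle vertex 2t+1; need t < s
      have hts' : t < s := by
        rcases Nat.lt_or_ge t s with h | h
        · exact h
        · exfalso
          have e0 : t = s := by omega
          have e1 : min (t+1) (s+1) = t+1 := by omega
          have e2 : min (t+1) s = t := by omega
          have hfs : f (t+1) = s + 2 + B s k + Tf s k (t+1) + t := by
            simp only [hf, e1, e2]
          have := Tf_succ s k t
          have hAe : Tf s k (t+1) = A s k := by rw [hA, e0]
          omega
      refine ⟨.inl ⟨2*t+1, by omega⟩, ?_⟩
      rw [fv_odd]
      have ht1 : f (t+1) = s + 2 + B s k + Tf s k (t+1) + (t+1) := by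
        have e1 : min (t+1) (s+1) = t+1 := by omega
        have e2 : min (t+1) s = t+1 := by omega
        simp only [hf, e1, e2]
      have := Tf_succ s k t
      omega

lemma image_fv : Finset.image (fv s k) Finset.univ = Finset.Icc 1 (p s k) := by
  apply Finset.Subset.antisymm
  · intro y hy
    rw [Finset.mem_image] at hy
    obtain ⟨v, _, rfl⟩ := hy
    exact fv_mem s k v
  · intro y hy
    rw [Finset.mem_image]
    obtain ⟨v, hv⟩ := fv_surj s k y hy
    exact ⟨v, Finset.mem_univ v, hv⟩

end SEMTaux

namespace SEMTaux
variable (s : ℕ) (k : Fin (2*s+1) → ℕ)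

lemma mmin_def : mmin s k = s + B s k + 2 := rfl

lemma k'_mk (m : ℕ) (h : m < 2*s+1) : k' s k m = k ⟨m, h⟩ := by simp [k', h]

lemma σ_mem (v : V s k) :
    σf s k v ∈ Finset.Icc (mmin s k) (mmin s k + p s k - 1) := by
  have hp := hp s k
  have hm := mmin_def s k
  rw [Finset.mem_Icc]
  rcases v with ⟨iv, hlt⟩ | ⟨⟨iv, hlt⟩, j⟩
  · obtain ⟨t, ht⟩ : ∃ t, iv = 2*t ∨ iv = 2*t+1 := ⟨iv/2, by omega⟩
    rcases ht with rfl | rfl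
    · rcases Nat.lt_or_ge t s with hts | hts
      · rw [σ_inl_even s k t hts]
        have h1 : Sf s k t ≤ B s k := Sf_mono s k (by omega)
        have h2 : Tf s k (t+1) ≤ A s k := Tf_mono s k (by omega)
        omega
      · have e0 : t = s := by omega
        subst e0
        rw [σ_last]
        omega
    · have hts : t < s := by omega
      rw [σ_inl_odd s k t hts]
      have h1 : Sf s k (t+1) ≤ B s k := Sf_mono s k (by omega)
      have h2 : Tf s k (t+1) ≤ A s k := Tf_mono s k (by omega)
      omega
  · have hj : j.val < k' s k iv := by rw [k'_eq s k ⟨iv, hlt⟩]; exact j.isLt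
    obtain ⟨t, ht⟩ : ∃ t, iv = 2*t ∨ iv = 2*t+1 := ⟨iv/2, by omega⟩
    rcases ht with rfl | rfl
    · rw [σ_pend_even]
      have h1 : Sf s k t ≤ B s k := Sf_mono s k (by omega)
      have h2 : Tf s k (t+1) ≤ A s k := Tf_mono s k (by omega)
      have h3 := Tf_succ s k t
      omega
    · rw [σ_pend_odd]
      have h1 : Sf s k (t+1) ≤ B s k := Sf_mono s k (by omega)
      have h2 : Tf s k (t+1) ≤ A s k := Tf_mono s k (by omega)
      have h3 := Sf_succ s k t
      omega

lemma σ_surj (y : ℕ) (hy : y ∈ Finset.Icc (mmin s k) (mmin s k + p s k - 1)) :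
    ∃ v, σf s k v = y := by
  have hp := hp s k
  have hm := mmin_def s k
  have hA := hA s k
  have hB := hB s k
  rw [Finset.mem_Icc] at hy
  by_cases hy0 : y = s + B s k + 2
  · exact ⟨.inl ⟨2*s, by omega⟩, by rw [σ_last]; omega⟩
  · have h0 : (fun t => if t ≤ s then s + B s k + 3 + 2*t + Sf s k t + Tf s k t
        else 3*s+3+A s k+2*B s k) 0 ≤ y := by
      simp only [if_pos (Nat.zero_le s), Sf, Tf]
      simp
      omega
    have hend : y < (fun t => if t ≤ s then s + B s k + 3 + 2*t + Sf s k t + Tf s k t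
        else 3*s+3+A s k+2*B s k) (s+1) := by
      simp only [if_neg (by omega : ¬ s+1 ≤ s)]
      omega
    obtain ⟨t, htn, h1, h2⟩ := exists_block (fun t => if t ≤ s then
      s + B s k + 3 + 2*t + Sf s k t + Tf s k t else 3*s+3+A s k+2*B s k) (s+1) y h0 hend
    have hts : t ≤ s := by omega
    rw [if_pos hts] at h1
    have hT := Tf_succ s k t
    have hS := Sf_succ s k t
    rcases Nat.lt_or_ge t s with hts' | hts'
    · rw [if_pos (by omega : t+1 ≤ s)] at h2
      by_cases c1 : y < s + B s k + 3 + 2*t + Sf s k t + Tf s k t + k' s k (2*t)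
      · have hb : 2*t < 2*s+1 := by omega
        obtain ⟨j, hj1, hj2⟩ : ∃ j, j < k ⟨2*t, hb⟩ ∧
            y = s + B s k + 3 + 2*t + Sf s k t + Tf s k t + j := by
          refine ⟨y - (s + B s k + 3 + 2*t + Sf s k t + Tf s k t), ?_, by omega⟩
          rw [← k'_mk s k (2*t) hb]
          omega
        exact ⟨.inr ⟨⟨2*t, hb⟩, ⟨j, hj1⟩⟩, by
          rw [σ_pend_even]; simp only [Fin.val_mk]; omega⟩
      · by_cases c2 : y = s + B s k + 3 + 2*t + Sf s k t + Tf s k t + k' s k (2*t)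
        · exact ⟨.inl ⟨2*t, by omega⟩, by rw [σ_inl_even s k t hts']; omega⟩
        · by_cases c3 : y < s + B s k + 4 + 2*t + Sf s k t + Tf s k (t+1) + k' s k (2*t+1)
          · have hb : 2*t+1 < 2*s+1 := by omega
            obtain ⟨j, hj1, hj2⟩ : ∃ j, j < k ⟨2*t+1, hb⟩ ∧
                y = s + B s k + 4 + 2*t + Sf s k t + Tf s k (t+1) + j := by
              refine ⟨y - (s + B s k + 4 + 2*t + Sf s k t + Tf s k (t+1)), ?_, by omega⟩
              rw [← k'_mk s k (2*t+1) hb]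
              omega
            exact ⟨.inr ⟨⟨2*t+1, hb⟩, ⟨j, hj1⟩⟩, by
              rw [σ_pend_odd]; simp only [Fin.val_mk]; omega⟩
          · refine ⟨.inl ⟨2*t+1, by omega⟩, ?_⟩
            rw [σ_inl_odd s k t hts']
            omega
    · -- t = s
      have e0 : t = s := by omega
      rw [if_neg (by omega : ¬ t+1 ≤ s)] at h2
      have hAe : A s k = Tf s k t + k' s k (2*t) := by
        rw [e0, hA]
        exact Tf_succ s k s
      have hBe : B s k = Sf s k t := by rw [hB, e0]
      have hb : 2*t < 2*s+1 := by omega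
      obtain ⟨j, hj1, hj2⟩ : ∃ j, j < k ⟨2*t, hb⟩ ∧
          y = s + B s k + 3 + 2*t + Sf s k t + Tf s k t + j := by
        refine ⟨y - (s + B s k + 3 + 2*t + Sf s k t + Tf s k t), ?_, by omega⟩
        rw [← k'_mk s k (2*t) hb]
        omega
      exact ⟨.inr ⟨⟨2*t, hb⟩, ⟨j, hj1⟩⟩, by
        rw [σ_pend_even]; simp only [Fin.val_mk]; omega⟩

lemma image_σ : Finset.image (σf s k) Finset.univ
    = Finset.Icc (mmin s k) (mmin s k + p s k - 1) := by
  apply Finset.Subset.antisymm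
  · intro y hy
    rw [Finset.mem_image] at hy
    obtain ⟨v, _, rfl⟩ := hy
    exact σ_mem s k v
  · intro y hy
    rw [Finset.mem_image]
    obtain ⟨v, hv⟩ := σ_surj s k y hy
    exact ⟨v, Finset.mem_univ v, hv⟩

end SEMTaux

namespace SEMTaux
variable (s : ℕ) (k : Fin (2*s+1) → ℕ)

lemma sum_split (f : ℕ → ℕ) : ∀ m : ℕ, ∑ i ∈ Finset.range (2*m+1), f i
    = (∑ r ∈ Finset.range (m+1), f (2*r)) + ∑ r ∈ Finset.range m, f (2*r+1)
  | 0 => by simp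
  | (m+1) => by
    have h : 2*(m+1)+1 = (2*m+1)+1+1 := by ring
    rw [h, Finset.sum_range_succ, Finset.sum_range_succ, sum_split f m,
      Finset.sum_range_succ (fun r => f (2*r)) (m+1),
      Finset.sum_range_succ (fun r => f (2*r+1)) m]
    have e1 : 2*m+1+1 = 2*(m+1) := by ring
    rw [e1]
    ring

lemma sum_univ_k : ∑ i : Fin (2*s+1), k i = A s k + B s k := by
  have h1 : ∑ i : Fin (2*s+1), k i = ∑ i ∈ Finset.range (2*s+1), k' s k i := by
    rw [← Fin.sum_univ_eq_sum_range]
    exact Finset.sum_congr rfl fun i _ => (k'_eq s k i).symm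
  rw [h1, sum_split (k' s k) s, hA, hB, Tf, Sf]

lemma card_V : Fintype.card (V s k) = p s k := by
  rw [hp]
  simp only [V, Fintype.card_sum, Fintype.card_sigma, Fintype.card_fin]
  rw [sum_univ_k]
  ring

lemma bijOn_of_image {α : Type*} [Fintype α] (f : α → ℕ) (I : Finset ℕ)
    (himg : Finset.image f Finset.univ = I) (hcard : I.card = Fintype.card α) :
    Set.BijOn f Set.univ ↑I := by
  have hinj : Set.InjOn f ↑(Finset.univ : Finset α) := by
    rw [← Finset.card_image_iff, himg, hcard, Finset.card_univ]
  refine ⟨fun x _ => ?_, by simpa using hinj, fun y hy => ?_⟩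
  · rw [← himg]
    exact Finset.mem_coe.2 (Finset.mem_image_of_mem f (Finset.mem_univ x))
  · rw [← himg, Finset.mem_coe, Finset.mem_image] at hy
    obtain ⟨x, _, hx⟩ := hy
    exact ⟨x, Set.mem_univ x, hx⟩

lemma fv_bijOn : Set.BijOn (fv s k) Set.univ (Set.Icc 1 (p s k)) := by
  have hc : (Finset.Icc 1 (p s k)).card = Fintype.card (V s k) := by
    rw [Nat.card_Icc, card_V]
    omega
  have := bijOn_of_image (fv s k) (Finset.Icc 1 (p s k)) (image_fv s k) hc
  simpa using this

lemma σ_bijOn : Set.BijOn (σf s k) Set.univ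
    (Set.Icc (mmin s k) (mmin s k + p s k - 1)) := by
  have hp1 : 1 ≤ p s k := by rw [hp]; omega
  have hc : (Finset.Icc (mmin s k) (mmin s k + p s k - 1)).card = Fintype.card (V s k) := by
    rw [Nat.card_Icc, card_V]
    omega
  have := bijOn_of_image (σf s k) (Finset.Icc (mmin s k) (mmin s k + p s k - 1)) (image_σ s k) hc
  simpa using this

lemma val_succ (hs : 1 ≤ s) (i : Fin (2*s+1)) :
    ((i+1 : Fin (2*s+1)).val = i.val + 1 ∧ i.val + 1 < 2*s+1) ∨
    ((i+1 : Fin (2*s+1)).val = 0 ∧ i.val = 2*s) := by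
  have h : (i+1 : Fin (2*s+1)).val = (i.val + 1) % (2*s+1) := by
    rw [Fin.add_def, Fin.val_one', Nat.mod_eq_of_lt (show (1:ℕ) < 2*s+1 by omega)]
  have hlt := i.isLt
  rcases Nat.lt_or_ge (i.val + 1) (2*s+1) with h' | h'
  · left
    rw [h, Nat.mod_eq_of_lt h']
    exact ⟨rfl, h'⟩
  · right
    have : i.val = 2*s := by omega
    rw [h, this]
    simp

lemma edgeSet_eq (hs : 1 ≤ s) :
    (pendantCycle (2*s+1) k).edgeSet = Set.range (Ef s k) := by
  ext e
  induction e with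
  | _ a b =>
    rw [SimpleGraph.mem_edgeSet, pendantCycle, SimpleGraph.fromRel_adj]
    constructor
    · rintro ⟨hne, h | h⟩
      · rcases h with ⟨i, j, rfl, rfl, hmod⟩ | ⟨i, j, rfl, rfl⟩
        · refine ⟨.inl i, ?_⟩
          have hj : i + 1 = j := by
            apply Fin.ext
            rw [Fin.add_def, Fin.val_one', Nat.mod_eq_of_lt (show (1:ℕ) < 2*s+1 by omega)]
            exact hmod
          show s(Sum.inl i, Sum.inl (i+1)) = _
          rw [hj]
        · exact ⟨.inr ⟨i, j⟩, rfl⟩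
      · rcases h with ⟨i, j, rfl, rfl, hmod⟩ | ⟨i, j, rfl, rfl⟩
        · refine ⟨.inl i, ?_⟩
          have hj : i + 1 = j := by
            apply Fin.ext
            rw [Fin.add_def, Fin.val_one', Nat.mod_eq_of_lt (show (1:ℕ) < 2*s+1 by omega)]
            exact hmod
          show s(Sum.inl i, Sum.inl (i+1)) = _
          rw [hj, Sym2.eq_swap]
        · exact ⟨.inr ⟨i, j⟩, Sym2.eq_swap⟩
    · rintro ⟨v, hv⟩
      rcases v with i | ⟨i, j⟩
      · have : Ef s k (.inl i) = s(Sum.inl i, Sum.inl (i+1)) := rfl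
        rw [this] at hv
        rw [Sym2.eq_iff] at hv
        have hne : i ≠ i + 1 := by
          intro hcon
          rcases val_succ s hs i with ⟨h1, h2⟩ | ⟨h1, h2⟩ <;>
            · rw [← hcon] at h1; omega
        have hmod : (i.val + 1) % (2*s+1) = (i+1 : Fin (2*s+1)).val := by
          rw [Fin.add_def, Fin.val_one', Nat.mod_eq_of_lt (show (1:ℕ) < 2*s+1 by omega)]
        rcases hv with ⟨rfl, rfl⟩ | ⟨rfl, rfl⟩
        · exact ⟨by simp [hne], Or.inl (Or.inl ⟨i, i+1, rfl, rfl, hmod⟩)⟩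
        · exact ⟨by simp [Ne.symm hne], Or.inr (Or.inl ⟨i, i+1, rfl, rfl, hmod⟩)⟩
      · have : Ef s k (.inr ⟨i, j⟩) = s(Sum.inr ⟨i, j⟩, Sum.inl i) := rfl
        rw [this] at hv
        rw [Sym2.eq_iff] at hv
        rcases hv with ⟨rfl, rfl⟩ | ⟨rfl, rfl⟩
        · exact ⟨by simp, Or.inl (Or.inr ⟨i, j, rfl, rfl⟩)⟩
        · exact ⟨by simp, Or.inr (Or.inr ⟨i, j, rfl, rfl⟩)⟩

lemma Ef_inj (hs : 1 ≤ s) : Function.Injective (Ef s k) := by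
  intro v w h
  rcases v with i | ⟨i, j⟩ <;> rcases w with i' | ⟨i', j'⟩ <;>
    simp only [Ef, nxt, Sym2.eq_iff] at h
  · rcases h with ⟨h1, _⟩ | ⟨h1, h2⟩
    · rw [h1]
    · rw [Sum.inl.injEq] at h1 h2
      exfalso
      have e1 : i.val = (i'+1 : Fin (2*s+1)).val := by rw [h1]
      have e2 : (i+1 : Fin (2*s+1)).val = i'.val := by rw [h2]
      rcases val_succ s hs i with ⟨a1, a2⟩ | ⟨a1, a2⟩ <;>
        rcases val_succ s hs i' with ⟨b1, b2⟩ | ⟨b1, b2⟩ <;> omega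
  · exfalso
    rcases h with ⟨h1, _⟩ | ⟨_, h2⟩
    · exact Sum.inl_ne_inr h1
    · exact Sum.inl_ne_inr h2
  · exfalso
    rcases h with ⟨h1, _⟩ | ⟨h1, _⟩
    · exact Sum.inr_ne_inl h1
    · exact Sum.inr_ne_inl h1
  · rcases h with ⟨h1, _⟩ | ⟨h1, _⟩
    · rw [h1]
    · exact absurd h1 Sum.inr_ne_inl

lemma ncard_edgeSet (hs : 1 ≤ s) : (pendantCycle (2*s+1) k).edgeSet.ncard = p s k := by
  rw [edgeSet_eq s k hs, ← Set.image_univ, Set.ncard_image_of_injective _ (Ef_inj s k hs),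
    Set.ncard_univ, Nat.card_eq_fintype_card, card_V]

end SEMTaux

namespace SEMTaux
variable (s : ℕ) (k : Fin (2*s+1) → ℕ)

lemma sum_even :
    (∑ i ∈ Finset.univ.filter (fun i : Fin (2*s+1) => Even i.val), k i) = A s k := by
  rw [hA, Tf]
  apply Finset.sum_bij' (i := fun (a : Fin (2*s+1)) (_ : a ∈ Finset.univ.filter
      (fun i : Fin (2*s+1) => Even i.val)) => a.val / 2)
    (j := fun r hr => (⟨2*r, by simp only [Finset.mem_range] at hr; omega⟩ : Fin (2*s+1)))
  case hi =>
    intro a ha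
    simp only [Finset.mem_filter, Finset.mem_univ, true_and, Nat.even_iff] at ha
    simp only [Finset.mem_range]
    have := a.isLt
    omega
  case hj =>
    intro r hr
    simp only [Finset.mem_filter, Finset.mem_univ, true_and, Fin.val_mk]
    exact even_two_mul r
  case left_neg =>
    intro a ha
    simp only [Finset.mem_filter, Finset.mem_univ, true_and, Nat.even_iff] at ha
    apply Fin.ext
    simp only [Fin.val_mk]
    omega
  case right_neg =>
    intro r hr
    simp only [Fin.val_mk]
    omega
  case h =>
    intro a ha
    simp only [Finset.mem_filter, Finset.mem_univ, true_and, Nat.even_iff] at ha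
    have h2 : 2 * (a.val / 2) = a.val := by omega
    rw [h2, k'_eq]

lemma sum_odd :
    (∑ i ∈ Finset.univ.filter (fun i : Fin (2*s+1) => ¬ Even i.val), k i) = B s k := by
  rw [hB, Sf]
  apply Finset.sum_bij' (i := fun (a : Fin (2*s+1)) (_ : a ∈ Finset.univ.filter
      (fun i : Fin (2*s+1) => ¬ Even i.val)) => a.val / 2)
    (j := fun r hr => (⟨2*r+1, by simp only [Finset.mem_range] at hr; omega⟩ : Fin (2*s+1)))
  case hi =>
    intro a ha
    simp only [Finset.mem_filter, Finset.mem_univ, true_and, Nat.even_iff] at ha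
    simp only [Finset.mem_range]
    have := a.isLt
    omega
  case hj =>
    intro r hr
    simp only [Finset.mem_filter, Finset.mem_univ, true_and, Nat.even_iff, Fin.val_mk]
    omega
  case left_neg =>
    intro a ha
    simp only [Finset.mem_filter, Finset.mem_univ, true_and, Nat.even_iff] at ha
    apply Fin.ext
    simp only [Fin.val_mk]
    omega
  case right_neg =>
    intro r hr
    simp only [Fin.val_mk]
    omega
  case h =>
    intro a ha
    simp only [Finset.mem_filter, Finset.mem_univ, true_and, Nat.even_iff] at ha
    have h2 : 2 * (a.val / 2) + 1 = a.val := by omega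
    rw [h2, k'_eq]

lemma main (hs : 1 ≤ s) :
    IsSEMT (pendantCycle (2*s+1) k) (fv s k) (fe s k) (c s k) := by
  have hq := ncard_edgeSet s k hs
  have hcV := card_V s k
  have hpd := hp s k
  have hcdef : c s k = 2 * p s k + mmin s k := rfl
  have hmd := mmin_def s k
  refine ⟨by rw [hcV]; exact fv_bijOn s k, ?_, ?_⟩
  · rw [hcV, hq, edgeSet_eq s k hs]
    have hσ := σ_bijOn s k
    have hfeE : ∀ v, fe s k (Ef s k v) = c s k - σf s k v := fun v => rfl
    refine ⟨?_, ?_, ?_⟩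
    · rintro e ⟨v, rfl⟩
      rw [hfeE]
      have h1 := hσ.mapsTo (Set.mem_univ v)
      simp only [Set.mem_Icc] at h1 ⊢
      omega
    · rintro e ⟨v, rfl⟩ e' ⟨w, rfl⟩ hfe
      rw [hfeE, hfeE] at hfe
      have h1 := hσ.mapsTo (Set.mem_univ v)
      have h2 := hσ.mapsTo (Set.mem_univ w)
      simp only [Set.mem_Icc] at h1 h2
      have hvw : σf s k v = σf s k w := by omega
      rw [hσ.injOn (Set.mem_univ v) (Set.mem_univ w) hvw]
    · intro y hy
      simp only [Set.mem_Icc] at hy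
      have hmem : c s k - y ∈ Set.Icc (mmin s k) (mmin s k + p s k - 1) := by
        simp only [Set.mem_Icc]
        omega
      obtain ⟨v, -, hv⟩ := hσ.surjOn hmem
      have h1 := hσ.mapsTo (Set.mem_univ v)
      simp only [Set.mem_Icc] at h1
      refine ⟨Ef s k v, ⟨v, rfl⟩, ?_⟩
      rw [hfeE, hv]
      omega
  · intro u v huv
    have h1 := (fv_bijOn s k).mapsTo (Set.mem_univ u)
    have h2 := (fv_bijOn s k).mapsTo (Set.mem_univ v)
    simp only [Set.mem_Icc] at h1 h2
    rw [fe_mk]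
    omega

end SEMTaux


/-- The unicyclic graph `G(n; k₁,…,kₙ)` with `n = 2s+1` is super edge-magic total, and its
strength is at most `2(k₁+k₃+⋯+k_{2s+1}) + 3(k₂+k₄+⋯+k_{2s}) + 2n + s + 2`.
(Here vertex `i : Fin n` corresponds to `a_{i+1}`, so `a_i` with odd `i` corresponds to even
`i.val`.) -/
theorem stmt_6 (s : ℕ) (hs : 1 ≤ s) (k : Fin (2 * s + 1) → ℕ) :
    (∃ fv fe c, IsSEMT (pendantCycle (2 * s + 1) k) fv fe c) ∧
    sInf {c | ∃ fv fe, IsSEMT (pendantCycle (2 * s + 1) k) fv fe c} ≤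
      2 * (∑ i ∈ Finset.univ.filter (fun i : Fin (2 * s + 1) => Even i.val), k i) +
      3 * (∑ i ∈ Finset.univ.filter (fun i : Fin (2 * s + 1) => ¬ Even i.val), k i) +
      2 * (2 * s + 1) + s + 2 := by
  have hsem := SEMTaux.main s k hs
  refine ⟨⟨_, _, _, hsem⟩, ?_⟩
  have hmem : SEMTaux.c s k ∈ {c | ∃ fv fe, IsSEMT (pendantCycle (2 * s + 1) k) fv fe c} :=
    ⟨_, _, hsem⟩
  have hle := Nat.sInf_le hmem
  refine le_trans hle ?_
  rw [SEMTaux.sum_even s k, SEMTaux.sum_odd s k]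
  have hc : SEMTaux.c s k = 2 * SEMTaux.p s k + SEMTaux.mmin s k := rfl
  have hpd := SEMTaux.hp s k
  have hmd := SEMTaux.mmin_def s k
  omega
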